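/- Let m, n be positive natural numbers, let a ≤ n, b ≤ m, and t < n be natural numbers with a·m = b·n, and let s : {0, …, m−1} → ℤ be a function such that a + t − n ≤ s(i) ≤ a for every i and the sum of s(i) over all i equals t·b. Then the number of indices i with s(i) = a + t − n is at most b. -/

import Mathlib

/-- Non-square case: if `s : Fin m → ℤ` satisfies `a + t - n ≤ s i ≤ a` for all `i`
and `∑ i, s i = t·b`, with `a·m = b·n`, then the number of indices with
`s i = a + t - n` is at most `b`. -/
theorem nonsquare_card_A1_le (m n : ℕ) (hm : 0 < m) (hn : 0 < n)
    (a b t : ℕ) (ha : a ≤ n) (hb : b ≤ m) (ht : t < n)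
    (hab : a * m = b * n)
    (s : Fin m → ℤ)
    (hlb : ∀ i, (a : ℤ) + t - n ≤ s i)
    (hub : ∀ i, s i ≤ (a : ℤ))
    (hsum : ∑ i, s i = (t : ℤ) * b) :
    (Finset.univ.filter (fun i : Fin m => s i = (a : ℤ) + t - n)).card ≤ b := by
  set A := Finset.univ.filter (fun i : Fin m => s i = (a : ℤ) + t - n) with hA
  have h1 : ∑ i ∈ A, s i = (A.card : ℤ) * ((a : ℤ) + t - n) := by
    rw [Finset.sum_congr rfl (fun i hi => (Finset.mem_filter.mp hi).2)]
    simp only [Finset.sum_const, nsmul_eq_mul]; rfl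
  have h2 : ∑ i ∈ Aᶜ, s i ≤ (Aᶜ.card : ℤ) * a := by
    calc ∑ i ∈ Aᶜ, s i ≤ ∑ _i ∈ Aᶜ, (a : ℤ) :=
          Finset.sum_le_sum (fun i _ => hub i)
      _ = (Aᶜ.card : ℤ) * a := by simp [mul_comm]
  have hsplit : ∑ i ∈ A, s i + ∑ i ∈ Aᶜ, s i = (t : ℤ) * b := by
    rw [Finset.sum_add_sum_compl]; exact hsum
  have hcard : (A.card : ℤ) + (Aᶜ.card : ℤ) = m := by
    have := Finset.card_add_card_compl A
    rw [Fintype.card_fin] at this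
    exact_mod_cast this
  have habz : (a : ℤ) * m = (b : ℤ) * n := by exact_mod_cast hab
  have hbz : (b : ℤ) ≤ m := by exact_mod_cast hb
  have htz : (t : ℤ) < n := by exact_mod_cast ht
  have haz : (a : ℤ) ≤ n := by exact_mod_cast ha
  have key : (A.card : ℤ) ≤ b := by nlinarith [h1, h2, hsplit, hcard]
  exact_mod_cast key
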